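/- Let n ≥ 1, let λ = (λ_1,…,λ_n) ∈ ℂⁿ satisfy λ_1 + ⋯ + λ_n = 0, let ς ∈ {+1,−1}, let 1 ≤ l ≤ n, and let V_0, …, V_n be the Bessel-equation coefficients attached to (n, λ). Define f : (0,∞) → ℂ by f(x) = ∑_{m=0}^{∞} (ς·iⁿ)ᵐ · x^{n(m−λ_l)} / ∏_{k=1}^n Γ(λ_k − λ_l + m + 1), where x^w = exp(w·log x) for x > 0 and 1/Γ is the entire reciprocal Gamma function. Then the series converges absolutely for every x > 0, f is infinitely differentiable on (0,∞), and for every x > 0 one has ∑_{j=0}^n V_j · x^j · f^{(j)}(x) = ς · iⁿ · nⁿ · xⁿ · f(x); that is, the Bessel function of the first kind J_l(x; ς, λ) solves the Bessel differential equation ∑_{j=1}^n V_j x^j w^{(j)} + (V_0 − ς(in)ⁿ xⁿ) w = 0 of sign ς. -/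

import Mathlib

open MeasureTheory

/-- The shifted double sequence `besselA' (j+1) (m+1) = A(j, m)`, where
`A(-1,0) = 1`, `A(-1,m) = 0` for `m ≥ 1`, `A(j,-1) = 0` for `j ≥ 0`, and
`A(j,m) = j·A(j,m-1) + A(j-1,m)` for `j, m ≥ 0`. -/
def besselA' : ℕ → ℕ → ℤ
  | 0, 0 => 0
  | 0, 1 => 1
  | 0, _ + 2 => 0
  | _ + 1, 0 => 0
  | j + 1, m + 1 => (j : ℤ) * besselA' (j + 1) m + besselA' j (m + 1)
termination_by j m => (j, m)

/-- `besselA j m = A(j, m)` for `j, m ≥ 0`. -/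
def besselA (j m : ℕ) : ℤ := besselA' (j + 1) (m + 1)

/-- The elementary symmetric polynomial of degree `m` in `λ_1, …, λ_N`. -/
noncomputable def esymm {N : ℕ} (lam : Fin N → ℂ) (m : ℕ) : ℂ :=
  ∑ t ∈ Finset.powersetCard m (Finset.univ : Finset (Fin N)), ∏ l ∈ t, lam l

/-- The Bessel-equation coefficients `V_j` attached to `(n, λ)`:
`V_j = ∑_{m=0}^{n-j} A(j, n-j-m) · nᵐ · e_m(λ)`. -/
noncomputable def besselV (n : ℕ) (lam : Fin n → ℂ) (j : ℕ) : ℂ :=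
  ∑ m ∈ Finset.range (n - j + 1), (besselA j (n - j - m) : ℂ) * (n : ℂ) ^ m * esymm lam m

namespace BesselAux

/-- Stirling numbers of the second kind. -/
def stirS : ℕ → ℕ → ℕ
  | 0, 0 => 1
  | 0, _ + 1 => 0
  | _ + 1, 0 => 0
  | k + 1, j + 1 => (j + 1) * stirS k (j + 1) + stirS k j

lemma stirS_eq_zero : ∀ (k j : ℕ), k < j → stirS k j = 0
  | 0, _ + 1, _ => rfl
  | k + 1, j + 1, h => by
    have h1 : stirS k (j + 1) = 0 := stirS_eq_zero k (j + 1) (by omega)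
    have h2 : stirS k j = 0 := stirS_eq_zero k j (by omega)
    simp [stirS, h1, h2]

lemma bA'_succ_zero (j : ℕ) : besselA' (j + 1) 0 = 0 := by simp [besselA']
lemma bA'_rec (j m : ℕ) : besselA' (j + 1) (m + 1) = (j : ℤ) * besselA' (j + 1) m + besselA' j (m + 1) := by
  rw [besselA']

lemma besselA_eq_stirS : ∀ (j m : ℕ), besselA j m = (stirS (j + m) j : ℤ)
  | 0, 0 => by
    show besselA' 1 1 = _
    rw [bA'_rec, bA'_succ_zero]
    simp [besselA', stirS]
  | 0, m + 1 => by
    show besselA' 1 (m + 2) = _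
    rw [bA'_rec]
    simp [besselA', stirS]
  | j + 1, 0 => by
    show besselA' (j + 2) 1 = _
    rw [bA'_rec, bA'_succ_zero]
    have h0 : besselA' (j + 1) 1 = besselA j 0 := rfl
    rw [h0, besselA_eq_stirS j 0]
    have : stirS (j + 1) (j + 1) = (j + 1) * stirS j (j + 1) + stirS j j := rfl
    rw [this, stirS_eq_zero j (j + 1) (by omega)]
    push_cast
    ring
  | j + 1, m + 1 => by
    show besselA' (j + 2) (m + 2) = _
    rw [bA'_rec]
    have h1 : besselA' (j + 2) (m + 1) = besselA (j + 1) m := rfl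
    have h2 : besselA' (j + 1) (m + 2) = besselA j (m + 1) := rfl
    rw [h1, h2, besselA_eq_stirS (j + 1) m, besselA_eq_stirS j (m + 1)]
    have : stirS (j + m + 2) (j + 1) = (j + 1) * stirS (j + m + 1) (j + 1) + stirS (j + m + 1) j := rfl
    have hgoal : j + 1 + (m + 1) = j + m + 2 := by omega
    rw [hgoal, this]
    have e1 : j + 1 + m = j + m + 1 := by omega
    have e2 : j + (m + 1) = j + m + 1 := by omega
    rw [e1, e2]
    push_cast
    ring

/-- falling factorial polynomial -/
noncomputable def ffall (w : ℂ) (j : ℕ) : ℂ := ∏ i ∈ Finset.range j, (w - i)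

lemma pow_eq_sum_stirS (k : ℕ) (w : ℂ) :
    w ^ k = ∑ j ∈ Finset.range (k + 1), (stirS k j : ℂ) * ffall w j := by
  induction k with
  | zero => simp [ffall, stirS]
  | succ k ih =>
    have hstep : ∀ j : ℕ, w * ffall w j = ffall w (j + 1) + (j : ℂ) * ffall w j := by
      intro j
      have : ffall w (j + 1) = ffall w j * (w - j) := Finset.prod_range_succ _ j
      rw [this]; ring
    have h1 : w ^ (k + 1) = ∑ j ∈ Finset.range (k + 1),
        (stirS k j : ℂ) * (ffall w (j + 1) + (j : ℂ) * ffall w j) := by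
      rw [pow_succ, mul_comm, ih, Finset.mul_sum]
      refine Finset.sum_congr rfl fun j _ => ?_
      rw [← hstep j]; ring
    rw [h1]
    rw [Finset.sum_range_succ' (fun j => (stirS (k + 1) j : ℂ) * ffall w j) (k + 1)]
    have hz : (stirS (k + 1) 0 : ℂ) = 0 := by
      norm_cast
    rw [hz, zero_mul, add_zero]
    have hrec : ∀ j : ℕ, (stirS (k + 1) (j + 1) : ℂ)
        = (j + 1 : ℂ) * stirS k (j + 1) + stirS k j := by
      intro j
      have : stirS (k + 1) (j + 1) = (j + 1) * stirS k (j + 1) + stirS k j := rfl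
      rw [this]; push_cast; ring
    -- LHS = ∑ j in range (k+1), s k j * ffall (j+1) + ∑ j, j * s k j * ffall j
    -- RHS = ∑ j in range (k+1), ((j+1) s k (j+1) + s k j) * ffall (j+1)
    have key : ∑ j ∈ Finset.range (k + 1), ((j : ℂ) + 1) * (stirS k (j + 1) : ℂ) * ffall w (j + 1)
        = ∑ j ∈ Finset.range (k + 1), (j : ℂ) * (stirS k j : ℂ) * ffall w j := by
      have := Finset.sum_range_succ' (fun j => (j : ℂ) * (stirS k j : ℂ) * ffall w j) k
      -- ∑_{j∈range (k+1)} f j = ∑_{j∈range k} f (j+1) + f 0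
      rw [Finset.sum_range_succ (fun j => ((j : ℂ) + 1) * (stirS k (j + 1) : ℂ) * ffall w (j + 1)) k]
      rw [stirS_eq_zero k (k + 1) (by omega)]
      push_cast
      rw [mul_zero, zero_mul, add_zero]
      rw [this]
      simp only [Nat.cast_zero, zero_mul, add_zero, Nat.cast_add, Nat.cast_one]
    calc ∑ j ∈ Finset.range (k + 1),
          (stirS k j : ℂ) * (ffall w (j + 1) + (j : ℂ) * ffall w j)
        = ∑ j ∈ Finset.range (k + 1), ((stirS k j : ℂ) * ffall w (j + 1)
            + (j : ℂ) * (stirS k j : ℂ) * ffall w j) := by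
          refine Finset.sum_congr rfl fun j _ => by ring
      _ = ∑ j ∈ Finset.range (k + 1), (stirS k j : ℂ) * ffall w (j + 1)
            + ∑ j ∈ Finset.range (k + 1), (j : ℂ) * (stirS k j : ℂ) * ffall w j := by
          rw [Finset.sum_add_distrib]
      _ = ∑ j ∈ Finset.range (k + 1), (stirS (k + 1) (j + 1) : ℂ) * ffall w (j + 1) := by
          rw [← key]
          rw [← Finset.sum_add_distrib]
          refine Finset.sum_congr rfl fun j _ => ?_
          rw [hrec j]; ring

open Polynomial Finset

lemma prod_add_esymm {n : ℕ} (lam : Fin n → ℂ) (w : ℂ) :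
    ∏ k, (w + (n : ℂ) * lam k)
      = ∑ k ∈ range (n + 1), ((n : ℂ) ^ (n - k) * esymm lam (n - k)) * w ^ k := by
  classical
  set p : ℂ[X] := ∏ i, (X + C ((n : ℂ) * lam i)) with hp
  have hdeg : p.natDegree = n := by
    rw [hp]
    rw [natDegree_prod_of_monic _ _ (fun i _ => monic_X_add_C _)]
    simp only [natDegree_X_add_C]
    simp
  have heval : ∏ k, (w + (n : ℂ) * lam k) = p.eval w := by
    rw [hp, eval_prod]
    refine Finset.prod_congr rfl fun i _ => by simp
  rw [heval, eval_eq_sum_range' (by omega : p.natDegree < n + 1)]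
  refine Finset.sum_congr rfl fun k hk => ?_
  have hk' : k ≤ n := by simp at hk; omega
  have hcoeff : p.coeff k = ∑ t ∈ powersetCard (n - k) (univ : Finset (Fin n)),
      ∏ i ∈ t, ((n : ℂ) * lam i) := by
    rw [hp]
    have := Finset.prod_X_add_C_coeff (univ : Finset (Fin n))
      (fun i => (n : ℂ) * lam i) (k := k) (by simpa using hk')
    simpa using this
  rw [hcoeff]
  congr 1
  rw [esymm, Finset.mul_sum]
  refine Finset.sum_congr rfl fun t ht => ?_
  have hcard : t.card = n - k := (Finset.mem_powersetCard.1 ht).2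
  rw [Finset.prod_mul_distrib, Finset.prod_const, hcard]

lemma besselV_eq {n : ℕ} (lam : Fin n → ℂ) {j : ℕ} (hj : j ≤ n) :
    besselV n lam j = ∑ k ∈ range (n + 1),
      (stirS k j : ℂ) * ((n : ℂ) ^ (n - k) * esymm lam (n - k)) := by
  have hr : ∑ k ∈ range (n + 1), (stirS k j : ℂ) * ((n : ℂ) ^ (n - k) * esymm lam (n - k))
      = ∑ k ∈ range (n + 1), (stirS (n - k) j : ℂ) * ((n : ℂ) ^ k * esymm lam k) := by
    rw [← Finset.sum_range_reflect]
    refine Finset.sum_congr rfl fun k hk => ?_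
    have hk' : k ≤ n := by simp at hk; omega
    have h1 : n + 1 - 1 - k = n - k := by omega
    have h2 : n - (n - k) = k := by omega
    rw [h1, h2]
  have hvanish : ∀ m ∈ range (n + 1), m ∉ range (n - j + 1) →
      (stirS (n - m) j : ℂ) * ((n : ℂ) ^ m * esymm lam m) = 0 := by
    intro m hm hm'
    simp only [Finset.mem_range] at hm hm'
    rw [stirS_eq_zero _ _ (by omega : n - m < j)]
    simp
  have hrestrict : ∑ k ∈ range (n + 1), (stirS (n - k) j : ℂ) * ((n : ℂ) ^ k * esymm lam k)
      = ∑ k ∈ range (n - j + 1), (stirS (n - k) j : ℂ) * ((n : ℂ) ^ k * esymm lam k) :=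
    (Finset.sum_subset (Finset.range_subset_range.2 (by omega : n - j + 1 ≤ n + 1)) hvanish).symm
  rw [hr, hrestrict, besselV]
  refine Finset.sum_congr rfl fun m hm => ?_
  have hm' : m ≤ n - j := by simp only [Finset.mem_range] at hm; omega
  rw [besselA_eq_stirS]
  have : j + (n - j - m) = n - m := by omega
  rw [this]
  push_cast
  ring

lemma charpoly {n : ℕ} (lam : Fin n → ℂ) (w : ℂ) :
    ∑ j ∈ range (n + 1), besselV n lam j * ffall w j = ∏ k, (w + (n : ℂ) * lam k) := by
  rw [prod_add_esymm]
  have hpow : ∀ k ∈ range (n + 1), ((n : ℂ) ^ (n - k) * esymm lam (n - k)) * w ^ k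
      = ∑ j ∈ range (n + 1),
        ((n : ℂ) ^ (n - k) * esymm lam (n - k)) * ((stirS k j : ℂ) * ffall w j) := by
    intro k hk
    have hk' : k ≤ n := by simp at hk; omega
    rw [← Finset.mul_sum]
    congr 1
    rw [pow_eq_sum_stirS k w]
    rw [Finset.sum_subset (Finset.range_subset_range.2 (by omega : k + 1 ≤ n + 1))]
    intro j hj hj'
    simp only [Finset.mem_range] at hj hj'
    rw [stirS_eq_zero k j (by omega)]
    simp
  rw [Finset.sum_congr rfl hpow, Finset.sum_comm]
  refine Finset.sum_congr rfl fun j hj => ?_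
  have hj' : j ≤ n := by simp at hj; omega
  rw [besselV_eq lam hj', Finset.sum_mul]
  refine Finset.sum_congr rfl fun k hk => by ring

section
open Complex Finset Filter

/-- Super-exponential decay class. -/
def Pc (c : ℕ → ℂ) : Prop := ∀ r : ℝ, Summable fun m : ℕ => ‖c m‖ * Real.exp (m * r)

lemma Pc.affine {c : ℕ → ℂ} (hc : Pc c) (α β : ℂ) :
    Pc fun m => (α * m + β) * c m := by
  intro r
  refine Summable.of_nonneg_of_le (fun m => by positivity) (fun m => ?_)
    ((hc (r + 1)).mul_left (‖α‖ + ‖β‖))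
  have h1 : ‖α * (m : ℂ) + β‖ ≤ ‖α‖ * m + ‖β‖ := by
    refine (norm_add_le _ _).trans ?_
    gcongr
    rw [norm_mul, Complex.norm_natCast]
  have hm1 : (m : ℝ) ≤ Real.exp m := by
    have := Real.add_one_le_exp (m : ℝ); linarith
  have hm2 : (1 : ℝ) ≤ Real.exp m := Real.one_le_exp (by positivity)
  have h2 : ‖α‖ * m + ‖β‖ ≤ (‖α‖ + ‖β‖) * Real.exp m := by
    nlinarith [norm_nonneg α, norm_nonneg β]
  have h3 : Real.exp m * Real.exp (m * r) = Real.exp (m * (r + 1)) := by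
    rw [← Real.exp_add]; congr 1; ring
  calc ‖(α * m + β) * c m‖ * Real.exp (m * r)
      = ‖α * (m:ℂ) + β‖ * ‖c m‖ * Real.exp (m * r) := by rw [norm_mul]
    _ ≤ ((‖α‖ + ‖β‖) * Real.exp m) * ‖c m‖ * Real.exp (m * r) :=
        mul_le_mul_of_nonneg_right (mul_le_mul_of_nonneg_right (h1.trans h2)
          (norm_nonneg _)) (le_of_lt (Real.exp_pos _))
    _ = (‖α‖ + ‖β‖) * (‖c m‖ * (Real.exp m * Real.exp (m * r))) := by ring
    _ = (‖α‖ + ‖β‖) * (‖c m‖ * Real.exp (m * (r + 1))) := by rw [h3]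

lemma Pc.congr_norm {c d : ℕ → ℂ} (hc : Pc c) (h : ∀ m, ‖d m‖ = ‖c m‖) : Pc d := by
  intro r
  exact (hc r).congr fun m => by rw [h m]

lemma inv_gamma_rec (w : ℂ) : w * (Complex.Gamma (w + 1))⁻¹ = (Complex.Gamma w)⁻¹ := by
  rcases eq_or_ne w 0 with h | h
  · simp [h, Complex.Gamma_zero]
  · rw [Complex.Gamma_add_one w h, mul_inv]
    rcases eq_or_ne (Complex.Gamma w) 0 with hg | hg
    · simp [hg]
    · field_simp

lemma Pc_gammaInv {n : ℕ} (hn : 1 ≤ n) (z : Fin n → ℂ) :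
    Pc fun m => ∏ k, (Complex.Gamma (z k + m + 1))⁻¹ := by
  intro r
  set B : ℝ := ∑ k, ‖z k‖ with hB
  have hBk : ∀ k, ‖z k‖ ≤ B :=
    fun k => Finset.single_le_sum (fun k _ => norm_nonneg (z k)) (mem_univ k)
  have hB0 : 0 ≤ B := Finset.sum_nonneg fun k _ => norm_nonneg _
  obtain ⟨M, hM⟩ := exists_nat_ge (max (2 * B + 2) (2 * 2 ^ n * Real.exp r))
  refine summable_of_ratio_norm_eventually_le (r := 1/2) (by norm_num) ?_
  rw [Filter.eventually_atTop]
  refine ⟨M, fun m hm => ?_⟩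
  have hmM : (M : ℝ) ≤ m := Nat.cast_le.2 hm
  have hmB : 2 * B + 2 ≤ (m : ℝ) := le_trans (le_max_left _ _) (hM.trans hmM)
  have hmE : 2 * 2 ^ n * Real.exp r ≤ (m : ℝ) := le_trans (le_max_right _ _) (hM.trans hmM)
  have hknorm : ∀ k, ((m : ℝ) + 1) / 2 ≤ ‖z k + m + 1‖ := by
    intro k
    have h1 : ‖((m : ℂ) + 1)‖ ≤ ‖z k + m + 1‖ + ‖z k‖ := by
      calc ‖((m : ℂ) + 1)‖ = ‖(z k + m + 1) - z k‖ := by ring_nf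
        _ ≤ ‖z k + m + 1‖ + ‖z k‖ := norm_sub_le _ _
    have h2 : ‖((m : ℂ) + 1)‖ = (m : ℝ) + 1 := by
      rw [show ((m : ℂ) + 1) = (((m : ℝ) + 1 : ℝ) : ℂ) by push_cast; ring]
      rw [Complex.norm_real, Real.norm_of_nonneg (by positivity)]
    have := hBk k
    rw [h2] at h1
    linarith
  have hnz : ∀ k, z k + m + 1 ≠ 0 := by
    intro k h
    have := hknorm k
    rw [h, norm_zero] at this
    have : (0:ℝ) < ((m:ℝ)+1)/2 := by positivity
    linarith [hknorm k, (by rw [h, norm_zero] : ‖z k + (m:ℂ) + 1‖ = 0)]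
  have hrec : ∀ k : Fin n, (Complex.Gamma (z k + (m + 1 : ℕ) + 1))⁻¹
      = (z k + m + 1)⁻¹ * (Complex.Gamma (z k + m + 1))⁻¹ := by
    intro k
    have hcast : (z k + ((m + 1 : ℕ) : ℂ) + 1) = (z k + m + 1) + 1 := by push_cast; ring
    rw [hcast, Complex.Gamma_add_one _ (hnz k), mul_inv]
  have hprodbound : ∏ k, ‖(z k + (m:ℂ) + 1)⁻¹‖ ≤ 2 ^ n / ((m : ℝ) + 1) := by
    have hstep : ∀ k : Fin n, ‖(z k + (m:ℂ) + 1)⁻¹‖ ≤ 2 / ((m : ℝ) + 1) := by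
      intro k
      rw [norm_inv]
      rw [show (2 : ℝ) / ((m:ℝ) + 1) = (((m:ℝ) + 1) / 2)⁻¹ by field_simp]
      exact inv_anti₀ (by positivity) (hknorm k)
    calc ∏ k, ‖(z k + (m:ℂ) + 1)⁻¹‖ ≤ ∏ _k : Fin n, (2 / ((m : ℝ) + 1)) :=
          Finset.prod_le_prod (fun k _ => norm_nonneg _) (fun k _ => hstep k)
      _ = (2 / ((m : ℝ) + 1)) ^ n := by rw [Finset.prod_const, Finset.card_univ, Fintype.card_fin]
      _ = 2 ^ n * (1 / ((m:ℝ) + 1)) ^ n := by rw [div_pow]; ring_nf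
      _ ≤ 2 ^ n * (1 / ((m:ℝ) + 1)) ^ 1 := by
          have hle1 : (1 : ℝ) / ((m:ℝ) + 1) ≤ 1 := by
            rw [div_le_one (by positivity)]
            have : (0:ℝ) ≤ m := Nat.cast_nonneg m
            linarith
          have := pow_le_pow_of_le_one (by positivity : (0:ℝ) ≤ 1 / ((m:ℝ) + 1)) hle1 hn
          exact mul_le_mul_of_nonneg_left this (by positivity)
      _ = 2 ^ n / ((m:ℝ) + 1) := by ring
  set a : ℕ → ℝ := fun m => ‖∏ k, (Complex.Gamma (z k + m + 1))⁻¹‖ * Real.exp (m * r) with ha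
  have ha0 : ∀ p, 0 ≤ a p := fun p => by positivity
  show ‖a (m + 1)‖ ≤ 1/2 * ‖a m‖
  rw [Real.norm_of_nonneg (ha0 _), Real.norm_of_nonneg (ha0 _)]
  have hsplit : a (m + 1) = (∏ k, ‖(z k + (m:ℂ) + 1)⁻¹‖) * Real.exp r * a m := by
    rw [ha]
    simp only
    rw [Finset.prod_congr rfl (fun k _ => hrec k), Finset.prod_mul_distrib, norm_mul,
      norm_prod]
    rw [show ((m + 1 : ℕ) : ℝ) * r = m * r + r by push_cast; ring, Real.exp_add]
    ring
  rw [hsplit]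
  have hexp : (∏ k, ‖(z k + (m:ℂ) + 1)⁻¹‖) * Real.exp r ≤ 1/2 := by
    have h1 : (∏ k, ‖(z k + (m:ℂ) + 1)⁻¹‖) * Real.exp r ≤ 2 ^ n / ((m : ℝ) + 1) * Real.exp r := by
      gcongr
    refine h1.trans ?_
    rw [div_mul_eq_mul_div, div_le_iff₀ (by positivity)]
    have hexp_pos : (0:ℝ) < Real.exp r := Real.exp_pos r
    have h2 : (0:ℝ) < 2 ^ n := by positivity
    nlinarith
  nlinarith [ha0 m, Finset.prod_nonneg (fun (k : Fin n) (_ : k ∈ univ) => norm_nonneg ((z k + (m:ℂ) + 1)⁻¹)), Real.exp_pos r]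

end
section
open Complex Finset Filter Topology

variable {n : ℕ} {μ : ℂ}

/-- exponents -/
noncomputable def ex (n : ℕ) (μ : ℂ) (m : ℕ) : ℂ := (n : ℂ) * ((m : ℂ) - μ)

/-- generalized power series -/
noncomputable def G (n : ℕ) (μ : ℂ) (c : ℕ → ℂ) (x : ℝ) : ℂ :=
  ∑' m, c m * (x : ℂ) ^ (ex n μ m)

lemma ex_re (m : ℕ) : (ex n μ m).re = (n : ℝ) * ((m : ℝ) - μ.re) := by
  rw [ex, show ((n:ℕ):ℂ) = (((n:ℕ):ℝ):ℂ) by norm_cast, Complex.re_ofReal_mul]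
  simp

lemma Pc.mul_ex {c : ℕ → ℂ} (hc : Pc c) : Pc fun m => ex n μ m * c m := by
  have he : (fun m => ex n μ m * c m)
      = fun m => ((n : ℂ) * m + (-((n : ℂ) * μ))) * c m := by
    funext m; rw [ex]; ring
  rw [he]
  exact hc.affine _ _

lemma summable_norm_term {c : ℕ → ℂ} (hc : Pc c) {x : ℝ} (hx : 0 < x) :
    Summable fun m => ‖c m * (x : ℂ) ^ (ex n μ m)‖ := by
  have key := (hc ((n : ℝ) * Real.log x)).mul_right
    (Real.exp (-((n : ℝ) * μ.re) * Real.log x))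
  refine key.congr fun m => ?_
  have hnorm : ‖(x : ℂ) ^ (ex n μ m)‖ = x ^ ((n : ℝ) * ((m : ℝ) - μ.re)) := by
    rw [Complex.norm_cpow_eq_rpow_re_of_pos hx, ex_re]
  calc ‖c m‖ * Real.exp (m * ((n : ℝ) * Real.log x)) * Real.exp (-((n : ℝ) * μ.re) * Real.log x)
      = ‖c m‖ * Real.exp (Real.log x * ((n : ℝ) * ((m : ℝ) - μ.re))) := by
        rw [mul_assoc, ← Real.exp_add]
        congr 2
        ring
    _ = ‖c m‖ * ‖(x : ℂ) ^ (ex n μ m)‖ := by rw [hnorm, Real.rpow_def_of_pos hx]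
    _ = ‖c m * (x : ℂ) ^ (ex n μ m)‖ := (norm_mul _ _).symm

lemma summable_term {c : ℕ → ℂ} (hc : Pc c) {x : ℝ} (hx : 0 < x) :
    Summable fun m => c m * (x : ℂ) ^ (ex n μ m) :=
  (summable_norm_term hc hx).of_norm

lemma hasDerivAt_cpow_ofReal (w : ℂ) {x : ℝ} (hx : 0 < x) :
    HasDerivAt (fun y : ℝ => (y : ℂ) ^ w) (w * (x : ℂ) ^ (w - 1)) x := by
  have hx0 : (x : ℂ) ≠ 0 := Complex.ofReal_ne_zero.2 hx.ne'
  have hlog : HasDerivAt (fun y : ℝ => ((Real.log y : ℝ) : ℂ)) ((x⁻¹ : ℝ) : ℂ) x :=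
    (Real.hasDerivAt_log hx.ne').ofReal_comp
  have hinner : HasDerivAt (fun y : ℝ => w * ((Real.log y : ℝ) : ℂ)) (w * ((x⁻¹ : ℝ) : ℂ)) x :=
    hlog.const_mul w
  have hexp := hinner.cexp
  have hcpow : ∀ y : ℝ, 0 < y → (y : ℂ) ^ w = Complex.exp (w * ((Real.log y : ℝ) : ℂ)) := by
    intro y hy
    rw [Complex.cpow_def_of_ne_zero (Complex.ofReal_ne_zero.2 hy.ne'),
      Complex.ofReal_log hy.le, mul_comm]
  have heq : (fun y : ℝ => (y : ℂ) ^ w)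
      =ᶠ[nhds x] fun y => Complex.exp (w * ((Real.log y : ℝ) : ℂ)) := by
    filter_upwards [Ioi_mem_nhds hx] with y hy
    exact hcpow y hy
  have hres := hexp.congr_of_eventuallyEq heq
  have hval : w * (x : ℂ) ^ (w - 1) = Complex.exp (w * ((Real.log x : ℝ) : ℂ)) * (w * ((x⁻¹ : ℝ) : ℂ)) := by
    rw [Complex.cpow_sub _ _ hx0, Complex.cpow_one, hcpow x hx, Complex.ofReal_inv]
    ring
  rw [hval]
  exact hres

lemma rpow_bound {x y : ℝ} (hx : 0 < x) (hy : y ∈ Set.Ioo (x/2) (x+x)) (b a : ℝ)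
    (hb : 0 ≤ b) :
    y ^ (b + a) ≤ Real.exp (b * Real.log (x + x))
      * Real.exp (|a| * (|Real.log (x/2)| + |Real.log (x+x)|)) := by
  have hy0 : 0 < y := lt_trans (by positivity) hy.1
  rw [Real.rpow_def_of_pos hy0, ← Real.exp_add]
  apply Real.exp_le_exp.2
  have hltop : Real.log y ≤ Real.log (x + x) := Real.log_le_log hy0 hy.2.le
  have hlbot : Real.log (x/2) ≤ Real.log y := Real.log_le_log (by positivity) hy.1.le
  have habs : |Real.log y| ≤ |Real.log (x/2)| + |Real.log (x+x)| := by
    rw [abs_le]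
    constructor
    · linarith [neg_abs_le (Real.log (x/2)), abs_nonneg (Real.log (x+x))]
    · linarith [le_abs_self (Real.log (x+x)), abs_nonneg (Real.log (x/2))]
  have h1 : b * Real.log y ≤ b * Real.log (x+x) := mul_le_mul_of_nonneg_left hltop hb
  have h2 : a * Real.log y ≤ |a| * (|Real.log (x/2)| + |Real.log (x+x)|) := by
    calc a * Real.log y ≤ |a * Real.log y| := le_abs_self _
      _ = |a| * |Real.log y| := abs_mul _ _
      _ ≤ |a| * (|Real.log (x/2)| + |Real.log (x+x)|) :=
          mul_le_mul_of_nonneg_left habs (abs_nonneg a)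
  calc Real.log y * (b + a) = b * Real.log y + a * Real.log y := by ring
    _ ≤ _ := add_le_add h1 h2

lemma hasDerivAt_G {c : ℕ → ℂ} (hc : Pc c) {x : ℝ} (hx : 0 < x) :
    HasDerivAt (G n μ c) ((x : ℂ)⁻¹ * G n μ (fun m => ex n μ m * c m) x) x := by
  have hx0 : (x : ℂ) ≠ 0 := Complex.ofReal_ne_zero.2 hx.ne'
  set s : Set ℝ := Set.Ioo (x/2) (x+x) with hs
  have hxs : x ∈ s := Set.mem_Ioo.2 ⟨by linarith, by linarith⟩
  have hsy : ∀ y ∈ s, 0 < y := fun y hy => lt_trans (by positivity) hy.1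
  set c' : ℕ → ℂ := fun m => ex n μ m * c m with hc'def
  have hPc' : Pc c' := hc.mul_ex
  set L : ℝ := |Real.log (x/2)| + |Real.log (x+x)| with hL
  set aa : ℝ := -((n : ℝ) * μ.re) - 1 with haa
  set g' : ℝ → ℂ := fun y => ∑' m, c' m * (y : ℂ) ^ (ex n μ m - 1) with hg'
  have hb : TendstoUniformlyOn
      (fun (N : ℕ) (y : ℝ) => ∑ m ∈ Finset.range N, c' m * (y : ℂ) ^ (ex n μ m - 1))
      g' atTop s := by
    apply tendstoUniformlyOn_tsum_nat
      (u := fun m => ‖c' m‖ * (Real.exp (m * ((n : ℝ) * Real.log (x+x)))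
        * Real.exp (|aa| * L)))
    · have := (hPc' ((n : ℝ) * Real.log (x+x))).mul_right (Real.exp (|aa| * L))
      exact this.congr fun m => by ring
    · intro m y hy
      have hy0 : 0 < y := hsy y hy
      rw [norm_mul]
      have hre : (ex n μ m - 1).re = (n : ℝ) * m + aa := by
        rw [Complex.sub_re, ex_re, Complex.one_re, haa]
        ring
      have hnorm : ‖(y : ℂ) ^ (ex n μ m - 1)‖ = y ^ ((n : ℝ) * m + aa) := by
        rw [Complex.norm_cpow_eq_rpow_re_of_pos hy0, hre]
      rw [hnorm]
      have hbd := rpow_bound hx hy ((n : ℝ) * m) aa (by positivity)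
      have hexpeq : Real.exp ((n : ℝ) * m * Real.log (x+x))
          = Real.exp (m * ((n : ℝ) * Real.log (x+x))) := by
        congr 1; ring
      rw [hexpeq] at hbd
      exact mul_le_mul_of_nonneg_left hbd (norm_nonneg _)
  have hderiv : ∀ N : ℕ, ∀ y ∈ s, HasDerivAt
      (fun y : ℝ => ∑ m ∈ Finset.range N, c m * (y : ℂ) ^ (ex n μ m))
      (∑ m ∈ Finset.range N, c' m * (y : ℂ) ^ (ex n μ m - 1)) y := by
    intro N y hy
    apply HasDerivAt.fun_sum
    intro m _
    have h := (hasDerivAt_cpow_ofReal (ex n μ m) (hsy y hy)).const_mul (c m)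
    have hv : c' m * (y : ℂ) ^ (ex n μ m - 1) = c m * (ex n μ m * (y : ℂ) ^ (ex n μ m - 1)) := by
      rw [hc'def]
      ring
    rw [hv]
    exact h
  have hpt : ∀ y ∈ s, Tendsto (fun N => ∑ m ∈ Finset.range N, c m * (y : ℂ) ^ (ex n μ m))
      atTop (𝓝 (G n μ c y)) := fun y hy =>
    (summable_term hc (hsy y hy)).hasSum.tendsto_sum_nat
  have hmain : HasDerivAt (G n μ c) (g' x) x :=
    hasDerivAt_of_tendstoUniformlyOn isOpen_Ioo hb (Filter.Eventually.of_forall hderiv)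
      hpt hxs
  convert hmain using 1
  rw [hg', G, ← tsum_mul_left]
  refine tsum_congr fun m => ?_
  rw [Complex.cpow_sub _ _ hx0, Complex.cpow_one]
  ring

lemma contDiffOn_ofReal_inv (k : ℕ) :
    ContDiffOn ℝ k (fun y : ℝ => ((y : ℂ))⁻¹) (Set.Ioi 0) := by
  have h1 : ContDiffOn ℝ k (fun y : ℝ => y⁻¹) (Set.Ioi 0) :=
    ContDiffOn.mono (contDiffOn_inv ℝ) (fun y hy => by
      simpa using ne_of_gt hy)
  have h2 := Complex.ofRealCLM.contDiff (n := (k : WithTop ℕ∞)).comp_contDiffOn h1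
  refine h2.congr fun y hy => ?_
  simp [Complex.ofReal_inv]

lemma contDiffOn_G_nat (k : ℕ) : ∀ (c : ℕ → ℂ), Pc c →
    ContDiffOn ℝ k (G n μ c) (Set.Ioi 0) := by
  induction k with
  | zero =>
    intro c hc
    refine contDiffOn_zero.2 fun y hy => ?_
    exact ((hasDerivAt_G hc hy).continuousAt).continuousWithinAt
  | succ k ih =>
    intro c hc
    have hcast : ((k + 1 : ℕ) : WithTop ℕ∞) = (k : WithTop ℕ∞) + 1 := by
      push_cast
      rfl
    rw [hcast, contDiffOn_succ_iff_derivWithin (uniqueDiffOn_Ioi 0)]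
    refine ⟨fun y hy => ((hasDerivAt_G hc hy).differentiableAt).differentiableWithinAt,
      ?_, ?_⟩
    · intro h
      exact absurd h (by exact_mod_cast (by simp : (k : WithTop ℕ∞) ≠ ⊤))
    · have hD : ∀ y ∈ Set.Ioi (0:ℝ), (fun y : ℝ => ((y : ℂ))⁻¹
          * G n μ (fun m => ex n μ m * c m) y) y = derivWithin (G n μ c) (Set.Ioi 0) y := by
        intro y hy
        rw [derivWithin_of_isOpen isOpen_Ioi hy]
        exact ((hasDerivAt_G hc hy).deriv).symm
      refine ContDiffOn.congr ?_ fun y hy => (hD y hy).symm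
      exact (contDiffOn_ofReal_inv k).mul (ih _ hc.mul_ex)

lemma contDiffOn_G_top {c : ℕ → ℂ} (hc : Pc c) :
    ContDiffOn ℝ ((⊤ : ℕ∞) : WithTop ℕ∞) (G n μ c) (Set.Ioi 0) := by
  have h : ∀ k : ℕ, ContDiffOn ℝ k (G n μ c) (Set.Ioi 0) :=
    fun k => contDiffOn_G_nat k c hc
  exact contDiffOn_infty.2 h

end
section
open Complex Finset Filter Topology

theorem stmt_2' (n : ℕ) (hn : 1 ≤ n) (lam : Fin n → ℂ)
    (hsum : ∑ l, lam l = 0)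
    (ς : ℂ) (hς : ς = 1 ∨ ς = -1) (l : Fin n)
    (f : ℝ → ℂ)
    (hf : ∀ x : ℝ, 0 < x → f x = ∑' m : ℕ,
      (ς * Complex.I ^ n) ^ m * (x : ℂ) ^ ((n : ℂ) * ((m : ℂ) - lam l)) *
        (∏ k, Complex.Gamma (lam k - lam l + m + 1))⁻¹) :
    (∀ x : ℝ, 0 < x → Summable (fun m : ℕ =>
        ‖(ς * Complex.I ^ n) ^ m * (x : ℂ) ^ ((n : ℂ) * ((m : ℂ) - lam l)) *
          (∏ k, Complex.Gamma (lam k - lam l + m + 1))⁻¹‖)) ∧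
      ContDiffOn ℝ (⊤ : ℕ∞) f (Set.Ioi 0) ∧
      ∀ x : ℝ, 0 < x →
        ∑ j ∈ Finset.range (n + 1), besselV n lam j * (x : ℂ) ^ j * iteratedDeriv j f x =
          ς * Complex.I ^ n * (n : ℂ) ^ n * (x : ℂ) ^ n * f x := by
  classical
  set μ : ℂ := lam l with hμ
  set z : Fin n → ℂ := fun k => lam k - lam l with hzdef
  set c : ℕ → ℂ := fun m => (ς * Complex.I ^ n) ^ m
    * ∏ k, (Complex.Gamma (z k + m + 1))⁻¹ with hcdef
  have hnς : ‖ς‖ = 1 := by rcases hς with h | h <;> simp [h]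
  have hunit : ∀ m : ℕ, ‖(ς * Complex.I ^ n) ^ m‖ = 1 := by
    intro m
    rw [norm_pow, norm_mul, hnς, norm_pow, Complex.norm_I]
    simp
  have hPc : Pc c := by
    refine (Pc_gammaInv hn z).congr_norm fun m => ?_
    rw [hcdef]
    simp only
    rw [norm_mul, hunit m, one_mul]
  have hgamcast : ∀ m : ℕ, (∏ k, Complex.Gamma (lam k - μ + m + 1))⁻¹
      = ∏ k, (Complex.Gamma (z k + m + 1))⁻¹ := by
    intro m
    rw [← Finset.prod_inv_distrib]
  have hfG : ∀ x : ℝ, 0 < x → f x = G n μ c x := by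
    intro x hx
    rw [hf x hx, G]
    refine tsum_congr fun m => ?_
    rw [hcdef]
    simp only
    rw [show ex n μ m = (n : ℂ) * ((m : ℂ) - lam l) from rfl, hgamcast m]
    ring
  refine ⟨?_, ?_, ?_⟩
  · -- summability
    intro x hx
    refine (summable_norm_term (n := n) (μ := μ) hPc hx).congr fun m => ?_
    rw [hcdef]
    simp only
    rw [show ex n μ m = (n : ℂ) * ((m : ℂ) - lam l) from rfl, hgamcast m]
    rw [norm_mul, norm_mul, norm_mul, norm_mul]
    ring
  · -- smoothness
    exact (contDiffOn_G_top hPc).congr fun x hx => hfG x hx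
  · -- the differential equation
    intro x hx
    have hx0 : (x : ℂ) ≠ 0 := Complex.ofReal_ne_zero.2 hx.ne'
    set cf : ℕ → ℕ → ℂ := fun j m => ffall (ex n μ m) j * c m with hcf
    have hPcf : ∀ j, Pc (cf j) := by
      intro j
      induction j with
      | zero =>
        refine hPc.congr_norm fun m => ?_
        rw [hcf]
        simp [ffall]
      | succ j ih =>
        have he : cf (j + 1) = fun m => ((n : ℂ) * m + (-((n : ℂ) * μ) - j)) * cf j m := by
          funext m
          rw [hcf]
          simp only
          rw [ffall, Finset.prod_range_succ, ← ffall]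
          rw [ex]
          ring
        rw [he]
        exact ih.affine _ _
    -- iterated derivative formula
    have hIter : ∀ j : ℕ, ∀ y : ℝ, 0 < y →
        iteratedDeriv j f y = (y : ℂ) ^ (-(j : ℂ)) * G n μ (cf j) y := by
      intro j
      induction j with
      | zero =>
        intro y hy
        rw [iteratedDeriv_zero]
        rw [hfG y hy]
        rw [show (-(0 : ℕ) : ℂ) = 0 by simp, Complex.cpow_zero, one_mul]
        congr 1
        funext m
        rw [hcf]
        simp [ffall]
      | succ j ih =>
        intro y hy
        have hy0 : (y : ℂ) ≠ 0 := Complex.ofReal_ne_zero.2 hy.ne'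
        rw [iteratedDeriv_succ]
        have hEv : iteratedDeriv j f =ᶠ[𝓝 y]
            fun t => (t : ℂ) ^ (-(j : ℂ)) * G n μ (cf j) t :=
          Filter.eventually_of_mem (Ioi_mem_nhds hy) fun t ht => ih t ht
        rw [hEv.deriv_eq]
        have h1 := hasDerivAt_cpow_ofReal (-(j : ℂ)) hy
        have h2 := hasDerivAt_G (n := n) (μ := μ) (hPcf j) hy
        rw [(h1.fun_mul h2).deriv]
        have hGsplit : G n μ (cf (j + 1)) y
            = G n μ (fun m => ex n μ m * cf j m) y - (j : ℂ) * G n μ (cf j) y := by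
          rw [show G n μ (cf (j+1)) y = ∑' m, (ex n μ m * cf j m * (y:ℂ) ^ (ex n μ m)
              - (j : ℂ) * (cf j m * (y:ℂ) ^ (ex n μ m))) from ?_]
          · rw [Summable.tsum_sub (summable_term (hPcf j).mul_ex hy)
              ((summable_term (hPcf j) hy).mul_left _)]
            rw [G, G, tsum_mul_left]
          · rw [G]
            refine tsum_congr fun m => ?_
            rw [hcf]
            simp only
            rw [ffall, Finset.prod_range_succ, ← ffall]
            ring
        rw [hGsplit]
        have e1 : (y : ℂ) ^ (-(j : ℂ)) * (y : ℂ)⁻¹ = (y : ℂ) ^ (-(j : ℂ) - 1) := by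
          rw [Complex.cpow_sub _ _ hy0, Complex.cpow_one]
          ring
        have e2 : (-((j + 1 : ℕ) : ℂ)) = -(j : ℂ) - 1 := by push_cast; ring
        rw [e2, ← e1]
        ring
    -- characteristic polynomial evaluation
    have hcoef : ∀ m : ℕ, ∑ j ∈ Finset.range (n + 1), besselV n lam j * cf j m
        = (∏ k, (ex n μ m + (n : ℂ) * lam k)) * c m := by
      intro m
      rw [← charpoly lam (ex n μ m), Finset.sum_mul]
      refine Finset.sum_congr rfl fun j _ => ?_
      rw [hcf]
      simp only
      ring
    -- values of the product coefficient
    have hd0 : (∏ k, (ex n μ 0 + (n : ℂ) * lam k)) * c 0 = 0 := by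
      have : ex n μ 0 + (n : ℂ) * lam l = 0 := by
        rw [ex, hμ]
        push_cast
        ring
      rw [Finset.prod_eq_zero (Finset.mem_univ l) this, zero_mul]
    have hdsucc : ∀ m : ℕ, (∏ k, (ex n μ (m + 1) + (n : ℂ) * lam k)) * c (m + 1)
        = ς * Complex.I ^ n * (n : ℂ) ^ n * c m := by
      intro m
      have hfac : ∀ k : Fin n, ex n μ (m + 1) + (n : ℂ) * lam k
          = (n : ℂ) * (z k + m + 1) := by
        intro k
        rw [ex, hμ, hzdef]
        push_cast
        ring
      rw [Finset.prod_congr rfl fun k _ => hfac k, Finset.prod_mul_distrib,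
        Finset.prod_const, Finset.card_univ, Fintype.card_fin]
      have hgam : (∏ k, (z k + (m : ℂ) + 1)) * ∏ k, (Complex.Gamma (z k + (m + 1 : ℕ) + 1))⁻¹
          = ∏ k, (Complex.Gamma (z k + m + 1))⁻¹ := by
        rw [← Finset.prod_mul_distrib]
        refine Finset.prod_congr rfl fun k _ => ?_
        have hcast : (z k + ((m + 1 : ℕ) : ℂ) + 1) = (z k + m + 1) + 1 := by
          push_cast; ring
        rw [hcast]
        exact inv_gamma_rec (z k + m + 1)
      rw [hcdef]
      simp only
      calc (n : ℂ) ^ n * (∏ k, (z k + (m : ℂ) + 1))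
            * ((ς * Complex.I ^ n) ^ (m + 1) * ∏ k, (Complex.Gamma (z k + ((m + 1 : ℕ) : ℂ) + 1))⁻¹)
          = (n : ℂ) ^ n * (ς * Complex.I ^ n) ^ (m + 1)
            * ((∏ k, (z k + (m : ℂ) + 1)) * ∏ k, (Complex.Gamma (z k + ((m + 1 : ℕ) : ℂ) + 1))⁻¹) := by
            ring
        _ = (n : ℂ) ^ n * (ς * Complex.I ^ n) ^ (m + 1)
            * ∏ k, (Complex.Gamma (z k + m + 1))⁻¹ := by
            rw [← hgam]
        _ = ς * Complex.I ^ n * (n : ℂ) ^ n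
            * ((ς * Complex.I ^ n) ^ m * ∏ k, (Complex.Gamma (z k + m + 1))⁻¹) := by
            rw [pow_succ]
            ring
    -- assemble
    have hpow1 : ∀ j : ℕ, ((x : ℂ)) ^ j * (x : ℂ) ^ (-(j : ℂ)) = 1 := by
      intro j
      rw [← Complex.cpow_natCast, ← Complex.cpow_add _ _ hx0,
        show (j : ℂ) + -(j : ℂ) = 0 by ring, Complex.cpow_zero]
    have hstep1 : ∑ j ∈ Finset.range (n + 1), besselV n lam j * (x : ℂ) ^ j
          * iteratedDeriv j f x
        = ∑ j ∈ Finset.range (n + 1), besselV n lam j * G n μ (cf j) x := by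
      refine Finset.sum_congr rfl fun j _ => ?_
      rw [hIter j x hx]
      calc besselV n lam j * (x : ℂ) ^ j * ((x : ℂ) ^ (-(j : ℂ)) * G n μ (cf j) x)
          = besselV n lam j * (((x : ℂ)) ^ j * (x : ℂ) ^ (-(j : ℂ))) * G n μ (cf j) x := by
            ring
        _ = besselV n lam j * G n μ (cf j) x := by rw [hpow1 j]; ring
    have hstep2 : ∑ j ∈ Finset.range (n + 1), besselV n lam j * G n μ (cf j) x
        = ∑' m, ((∏ k, (ex n μ m + (n : ℂ) * lam k)) * c m) * (x : ℂ) ^ (ex n μ m) := by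
      calc ∑ j ∈ Finset.range (n + 1), besselV n lam j * G n μ (cf j) x
          = ∑ j ∈ Finset.range (n + 1), ∑' m, besselV n lam j
              * (cf j m * (x : ℂ) ^ (ex n μ m)) := by
            refine Finset.sum_congr rfl fun j _ => ?_
            rw [G, tsum_mul_left]
        _ = ∑' m, ∑ j ∈ Finset.range (n + 1), besselV n lam j
              * (cf j m * (x : ℂ) ^ (ex n μ m)) := by
            refine (Summable.tsum_finsetSum fun j _ => ?_).symm
            exact (summable_term (hPcf j) hx).mul_left _
        _ = ∑' m, ((∏ k, (ex n μ m + (n : ℂ) * lam k)) * c m) * (x : ℂ) ^ (ex n μ m) := by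
            refine tsum_congr fun m => ?_
            rw [← hcoef m, Finset.sum_mul]
            refine Finset.sum_congr rfl fun j _ => by ring
    have hsumd : Summable fun m => ((∏ k, (ex n μ m + (n : ℂ) * lam k)) * c m)
        * (x : ℂ) ^ (ex n μ m) := by
      have h1 : Summable fun m => ∑ j ∈ Finset.range (n + 1), besselV n lam j
          * (cf j m * (x : ℂ) ^ (ex n μ m)) :=
        summable_sum fun j _ => (summable_term (hPcf j) hx).mul_left _
      refine h1.congr fun m => ?_
      rw [← hcoef m, Finset.sum_mul]
      refine Finset.sum_congr rfl fun j _ => by ring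
    rw [hstep1, hstep2]
    rw [Summable.tsum_eq_zero_add hsumd]
    rw [hd0, zero_mul, zero_add]
    have hterm : ∀ m : ℕ, ((∏ k, (ex n μ (m + 1) + (n : ℂ) * lam k)) * c (m + 1))
        * (x : ℂ) ^ (ex n μ (m + 1))
        = (ς * Complex.I ^ n * (n : ℂ) ^ n * (x : ℂ) ^ n)
          * (c m * (x : ℂ) ^ (ex n μ m)) := by
      intro m
      rw [hdsucc m]
      have hexadd : ex n μ (m + 1) = ex n μ m + (n : ℂ) := by
        rw [ex, ex]; push_cast; ring
      rw [hexadd, Complex.cpow_add _ _ hx0, Complex.cpow_natCast]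
      ring
    rw [tsum_congr hterm, tsum_mul_left, hfG x hx, G]
    try ring

end

end BesselAux

/-- The Bessel function of the first kind `J_l(x; ς, λ)` converges absolutely,
is smooth on `(0,∞)`, and solves the Bessel differential equation of sign `ς`. -/
theorem stmt_2 (n : ℕ) (hn : 1 ≤ n) (lam : Fin n → ℂ)
    (hsum : ∑ l, lam l = 0)
    (ς : ℂ) (hς : ς = 1 ∨ ς = -1) (l : Fin n)
    (f : ℝ → ℂ)
    (hf : ∀ x : ℝ, 0 < x → f x = ∑' m : ℕ,
      (ς * Complex.I ^ n) ^ m * (x : ℂ) ^ ((n : ℂ) * ((m : ℂ) - lam l)) *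
        (∏ k, Complex.Gamma (lam k - lam l + m + 1))⁻¹) :
    (∀ x : ℝ, 0 < x → Summable (fun m : ℕ =>
        ‖(ς * Complex.I ^ n) ^ m * (x : ℂ) ^ ((n : ℂ) * ((m : ℂ) - lam l)) *
          (∏ k, Complex.Gamma (lam k - lam l + m + 1))⁻¹‖)) ∧
      ContDiffOn ℝ (⊤ : ℕ∞) f (Set.Ioi 0) ∧
      ∀ x : ℝ, 0 < x →
        ∑ j ∈ Finset.range (n + 1), besselV n lam j * (x : ℂ) ^ j * iteratedDeriv j f x =
          ς * Complex.I ^ n * (n : ℂ) ^ n * (x : ℂ) ^ n * f x :=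
  BesselAux.stmt_2' n hn lam hsum ς hς l f hf
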